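/- Let Δ be a (d−1)-dimensional balanced simplicial complex on [n] with coloring map κ, and give the polynomial ring R = K[x_1,…,x_n] the Z^d-grading with deg x_v = e_{κ(v)}. Then the Z^d-graded Hilbert series of the Stanley-Reisner ring K[Δ] satisfies Σ_{a ∈ Z^d} dim_K (K[Δ])_a · t^a = (Σ_{S ⊆ [d]} h_S(Δ) Π_{i∈S} t_i) / ((1−t_1)(1−t_2)⋯(1−t_d)), as formal power series in t_1,…,t_d. -/

import Mathlib

open Finset BigOperators

namespace BGLB

variable {V : Type*} [DecidableEq V]

/-- `Δ` is an (abstract) simplicial complex: it contains the empty face and is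
closed under taking subsets. -/
def IsComplex (Δ : Finset (Finset V)) : Prop :=
  ∅ ∈ Δ ∧ ∀ F ∈ Δ, ∀ G ⊆ F, G ∈ Δ

/-- `Δ` is pure of dimension `d - 1`: every face is contained in a face of cardinality `d`. -/
def IsPure (d : ℕ) (Δ : Finset (Finset V)) : Prop :=
  ∀ F ∈ Δ, ∃ G ∈ Δ, F ⊆ G ∧ G.card = d

/-- `Δ` has dimension at most `d - 1`. -/
def DimLE (d : ℕ) (Δ : Finset (Finset V)) : Prop := ∀ F ∈ Δ, F.card ≤ d

/-- `Δ` has dimension exactly `d - 1`. -/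
def DimEq (d : ℕ) (Δ : Finset (Finset V)) : Prop := DimLE d Δ ∧ ∃ F ∈ Δ, F.card = d

/-- `fNum Δ j` is the number `f_{j-1}(Δ)` of faces of `Δ` of cardinality `j`. -/
def fNum (Δ : Finset (Finset V)) (j : ℕ) : ℕ := (Δ.filter fun F => F.card = j).card

/-- The `h`-numbers of `Δ` with respect to the dimension parameter `d`:
`h_i = ∑_{j=0}^{i} (-1)^{i-j} C(d-j, i-j) f_{j-1}`. -/
def hNum (d : ℕ) (Δ : Finset (Finset V)) (i : ℕ) : ℤ :=
  ∑ j ∈ Finset.range (i + 1), (-1 : ℤ) ^ (i - j) * ((d - j).choose (i - j)) * fNum Δ j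

/-- The balanced `g`-numbers `g̅_i = i h_i - (d - i + 1) h_{i-1}` (with `h_{-1} = 0`). -/
def gbar (d : ℕ) (Δ : Finset (Finset V)) : ℕ → ℤ
  | 0 => 0
  | i + 1 => (i + 1 : ℤ) * hNum d Δ (i + 1) - ((d : ℤ) - (i + 1) + 1) * hNum d Δ i

/-- `κ` is a proper `d`-coloring of (the graph of) `Δ`: the two endpoints of any
edge get different colors. -/
def IsBalanced (d : ℕ) (Δ : Finset (Finset V)) (κ : V → Fin d) : Prop :=
  ∀ F ∈ Δ, F.card = 2 → ∀ x ∈ F, ∀ y ∈ F, x ≠ y → κ x ≠ κ y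

/-- The rank-selected subcomplex `Δ_T = {F ∈ Δ : κ(F) ⊆ T}`. -/
def rankSel {d : ℕ} (Δ : Finset (Finset V)) (κ : V → Fin d) (T : Finset (Fin d)) :
    Finset (Finset V) :=
  Δ.filter fun F => ∀ v ∈ F, κ v ∈ T

/-- The link `lk_Δ(F) = {G ∈ Δ : F ∪ G ∈ Δ, F ∩ G = ∅}`. -/
def link (Δ : Finset (Finset V)) (F : Finset V) : Finset (Finset V) :=
  Δ.filter fun G => Disjoint F G ∧ F ∪ G ∈ Δ





/-- The Stanley-Reisner ideal of `Δ` in `K[x_v : v ∈ V]`: the ideal generated by the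
squarefree monomials `x_F = ∏_{v ∈ F} x_v` for the non-faces `F ∉ Δ`. -/
noncomputable def srIdeal (K : Type*) [Field K] (Δ : Finset (Finset V)) : Ideal (MvPolynomial V K) :=
  Ideal.span {m | ∃ F : Finset V, F ∉ Δ ∧ m = ∏ v ∈ F, MvPolynomial.X v}

/-- The sum of variables of color `i`: `θ_i = ∑_{κ(v) = i} x_v`. -/
noncomputable def colorSum (K : Type*) [Field K] {n d : ℕ} (κ : Fin n → Fin d) (i : Fin d) :
    MvPolynomial (Fin n) K :=
  ∑ v ∈ Finset.univ.filter (fun v => κ v = i), MvPolynomial.X v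

/-- The degree `i` component (w.r.t. the standard grading) of the quotient of a
polynomial ring by the ideal `I`, as the image of the degree `i` homogeneous part. -/
noncomputable def piece (K : Type*) [Field K] {σ : Type*} (I : Ideal (MvPolynomial σ K)) (i : ℕ) :
    Submodule K (MvPolynomial σ K ⧸ I) :=
  (MvPolynomial.homogeneousSubmodule σ K i).map (Ideal.Quotient.mkₐ K I).toLinearMap

/-- The degree `a` component (w.r.t. the grading weighted by `w`) of the quotient of a
polynomial ring by the ideal `I`. -/
noncomputable def wpiece (K : Type*) [Field K] {σ M : Type*} [AddCommMonoid M] (w : σ → M)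
    (I : Ideal (MvPolynomial σ K)) (a : M) :
    Submodule K (MvPolynomial σ K ⧸ I) :=
  (MvPolynomial.weightedHomogeneousSubmodule K w a).map (Ideal.Quotient.mkₐ K I).toLinearMap

/-- `θ` is a linear system of parameters for `(MvPolynomial σ K) ⧸ I`:
a sequence of linear forms such that the quotient by them is a finite-dimensional
`K`-vector space. -/
def IsLSOP (K : Type*) [Field K] {σ : Type*} (I : Ideal (MvPolynomial σ K)) {m : ℕ}
    (θ : Fin m → MvPolynomial σ K) : Prop :=
  (∀ i, θ i ∈ MvPolynomial.homogeneousSubmodule σ K 1) ∧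
    FiniteDimensional K (MvPolynomial σ K ⧸ (I ⊔ Ideal.span (Set.range θ)))

/-- `Δ` (of dimension `d - 1`) is Cohen-Macaulay over `K`: every linear system of
parameters of the Stanley-Reisner ring `K[Δ]` is a regular sequence on `K[Δ]`. -/
def IsCM (K : Type*) [Field K] (d : ℕ) (Δ : Finset (Finset V)) : Prop :=
  ∀ θ : Fin d → MvPolynomial V K, IsLSOP K (srIdeal K Δ) θ →
    RingTheory.Sequence.IsRegular (MvPolynomial V K ⧸ srIdeal K Δ) (List.ofFn θ)

section Homology

variable [LinearOrder V] [Fintype V] (K : Type*) [Field K]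

/-- The faces of `Δ` of cardinality `k`. -/
def Faces (Δ : Finset (Finset V)) (k : ℕ) : Type _ := {F : Finset V // F ∈ Δ ∧ F.card = k}

/-- The simplicial (reduced) boundary map from `k+1`-element faces to `k`-element faces:
`∂(e_F) = ∑_{v ∈ F} (-1)^{|{u ∈ F : u < v}|} e_{F \ v}`, written in the dual basis. -/
noncomputable def bdry (Δ : Finset (Finset V)) (k : ℕ) :
    ((Faces Δ (k + 1) → K) →ₗ[K] (Faces Δ k → K)) :=
  LinearMap.pi fun G =>
    ∑ v ∈ Finset.univ \ G.1,
      if h : insert v G.1 ∈ Δ ∧ (insert v G.1).card = k + 1 then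
        ((-1 : K) ^ (G.1.filter (fun u => u < v)).card) •
          (LinearMap.proj (⟨insert v G.1, h⟩ : Faces Δ (k + 1)))
      else 0

/-- The reduced cycles in cardinality `k`: everything for `k = 0` (chains on the empty
face), and the kernel of the boundary map for `k ≥ 1`. -/
noncomputable def cycles (Δ : Finset (Finset V)) : (k : ℕ) → Submodule K (Faces Δ k → K)
  | 0 => ⊤
  | j + 1 => LinearMap.ker (bdry K Δ j)

/-- The reduced simplicial homology `H̃_{k-1}(Δ; K)` (indexed so that `k` is the
cardinality of the faces involved): cycles modulo boundaries. -/
noncomputable abbrev redHomology (Δ : Finset (Finset V)) (k : ℕ) :=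
  cycles K Δ k ⧸ (LinearMap.range (bdry K Δ k)).comap (cycles K Δ k).subtype

/-- `Δ` (of dimension `d-1`) is Gorenstein* over `K`: for every face `F ∈ Δ`, the link of
`F` has the reduced homology of a sphere of dimension `d - 1 - #F`. -/
def IsGorensteinStar (d : ℕ) (Δ : Finset (Finset V)) : Prop :=
  ∀ F ∈ Δ, ∀ k : ℕ,
    (k = d - F.card → Nonempty (redHomology K (link Δ F) k ≃ₗ[K] K)) ∧
    (k ≠ d - F.card → Subsingleton (redHomology K (link Δ F) k))

end Homology

/-- The flag `f`-number `f_S(Δ) = #{F ∈ Δ : κ(F) = S}`. -/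
def fFlag {d : ℕ} (κ : V → Fin d) (Δ : Finset (Finset V)) (S : Finset (Fin d)) : ℕ :=
  (Δ.filter fun F => F.image κ = S).card

/-- The flag `h`-number `h_S(Δ) = ∑_{T ⊆ S} (-1)^{#S - #T} f_T(Δ)`. -/
def hFlag {d : ℕ} (κ : V → Fin d) (Δ : Finset (Finset V)) (S : Finset (Fin d)) : ℤ :=
  ∑ T ∈ S.powerset, (-1 : ℤ) ^ (S.card - T.card) * fFlag κ Δ T


section Aux

variable {α : Type*} [DecidableEq α]

noncomputable def indF (T : Finset α) : α →₀ ℕ := ∑ i ∈ T, Finsupp.single i 1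
lemma indF_apply (T : Finset α) (j : α) : indF T j = if j ∈ T then 1 else 0 := by
  classical
  simp [indF, Finsupp.finset_sum_apply, Finsupp.single_apply]
lemma indF_support (T : Finset α) : (indF T).support = T := by
  ext j; simp [Finsupp.mem_support_iff, indF_apply]
lemma indF_le_iff (T : Finset α) (m : α →₀ ℕ) : indF T ≤ m ↔ T ⊆ m.support := by
  constructor
  · intro h j hj
    have := h j
    rw [indF_apply, if_pos hj] at this
    simp [Finsupp.mem_support_iff]; omega
  · intro h j
    rw [indF_apply]
    split
    · next hj => have := h hj; simp [Finsupp.mem_support_iff] at this; omega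
    · exact Nat.zero_le _

lemma sub_indF_support {S T : Finset α} (hTS : T ⊆ S) :
    (indF S - indF T).support = S \ T := by
  ext j
  simp only [Finsupp.mem_support_iff, Finsupp.tsub_apply, indF_apply, Finset.mem_sdiff]
  by_cases hjT : j ∈ T
  · simp [hjT, hTS hjT]
  · by_cases hjS : j ∈ S <;> simp [hjT, hjS]

variable {dd : ℕ}

lemma prod_X_ps (T : Finset (Fin dd)) :
    (∏ i ∈ T, (MvPowerSeries.X i : MvPowerSeries (Fin dd) ℤ))
      = MvPowerSeries.monomial (R := ℤ) (indF T) 1 := by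
  classical
  induction T using Finset.cons_induction with
  | empty => simp [indF]
  | cons i T hi ih =>
    rw [Finset.prod_cons, ih, MvPowerSeries.X, MvPowerSeries.monomial_mul_monomial, one_mul]
    congr 1
    rw [indF, indF, Finset.sum_cons]

lemma prod_one_sub_X :
    (∏ i : Fin dd, (1 - MvPowerSeries.X i : MvPowerSeries (Fin dd) ℤ))
      = ∑ T ∈ (Finset.univ : Finset (Fin dd)).powerset,
          ((-1 : ℤ) ^ T.card) • MvPowerSeries.monomial (R := ℤ) (indF T) 1 := by
  classical
  have h : ∀ i : Fin dd, (1 - MvPowerSeries.X i : MvPowerSeries (Fin dd) ℤ)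
      = -MvPowerSeries.X i + 1 := fun i => by ring
  rw [Finset.prod_congr rfl fun i _ => h i, Finset.prod_add]
  refine Finset.sum_congr rfl fun T _ => ?_
  rw [Finset.prod_const_one, mul_one]
  have : ∀ i ∈ T, (-MvPowerSeries.X i : MvPowerSeries (Fin dd) ℤ)
      = (-1 : MvPowerSeries (Fin dd) ℤ) * MvPowerSeries.X i := fun i _ => by ring
  rw [Finset.prod_congr rfl this, Finset.prod_mul_distrib, Finset.prod_const, prod_X_ps,
    zsmul_eq_mul]
  push_cast
  ring

lemma series_key (f : Finset (Fin dd) → ℤ) :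
    (show MvPowerSeries (Fin dd) ℤ from fun a : Fin dd →₀ ℕ => f a.support) *
        ∏ i : Fin dd, (1 - MvPowerSeries.X i) =
      ∑ S ∈ (Finset.univ : Finset (Fin dd)).powerset,
        (∑ T ∈ S.powerset, (-1 : ℤ) ^ (S.card - T.card) * f T) •
          MvPowerSeries.monomial (R := ℤ) (indF S) 1 := by
  classical
  rw [prod_one_sub_X, Finset.mul_sum]
  apply MvPowerSeries.ext
  intro c
  rw [map_sum, map_sum]
  generalize hφ : (show MvPowerSeries (Fin dd) ℤ from fun a : Fin dd →₀ ℕ => f a.support) = φ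
  simp only [LinearMap.map_smul_of_tower, smul_eq_mul, mul_smul_comm,
    MvPowerSeries.coeff_mul_monomial, MvPowerSeries.coeff_monomial, mul_one]
  simp only [MvPowerSeries.coeff_apply]
  subst hφ
  dsimp only
  by_cases hc : ∀ i, c i ≤ 1
  · -- squarefree case
    set S₀ := c.support with hS₀
    have hcind : c = indF S₀ := by
      ext i
      rw [indF_apply]
      split
      · next hi =>
        have h1 := Finsupp.mem_support_iff.mp hi
        have h2 := hc i
        omega
      · next hi => exact Finsupp.notMem_support_iff.mp hi
    -- RHS
    have hz1 : ∀ S ∈ (Finset.univ : Finset (Fin dd)).powerset, S ≠ S₀ →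
        (∑ T ∈ S.powerset, (-1 : ℤ) ^ (S.card - T.card) * f T) * (if c = indF S then 1 else 0)
          = 0 := by
      intro S _ hSne
      rw [if_neg, mul_zero]
      intro h
      exact hSne (by
        have : (indF S).support = (indF S₀).support := by rw [← h, hcind]
        rwa [indF_support, indF_support] at this)
    conv_rhs => rw [Finset.sum_eq_single S₀ hz1
      (fun h => absurd (Finset.mem_powerset.mpr (Finset.subset_univ S₀)) h)]
    rw [if_pos hcind, mul_one]
    -- LHS
    have hLHS : ∀ T ∈ (Finset.univ : Finset (Fin dd)).powerset,
        ((-1 : ℤ) ^ T.card * if indF T ≤ c then f ((c - indF T).support) else 0)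
          = if T ∈ S₀.powerset then (-1 : ℤ) ^ T.card * f (S₀ \ T) else 0 := by
      intro T _
      by_cases hT : T ⊆ S₀
      · rw [if_pos (Finset.mem_powerset.mpr hT), if_pos (by rw [hcind]; exact (indF_le_iff T _).mpr (by rw [indF_support]; exact hT))]
        congr 2
        rw [hcind, sub_indF_support hT]
      · rw [if_neg (fun h => hT (Finset.mem_powerset.mp h)), if_neg (fun h => hT (by
          have := (indF_le_iff T c).mp h
          rwa [← hS₀] at this)), mul_zero]
    rw [Finset.sum_congr rfl hLHS]
    rw [← Finset.sum_subset (Finset.powerset_mono.mpr (Finset.subset_univ S₀))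
      (fun T _ hT => by rw [if_neg hT])]
    rw [Finset.sum_congr rfl (fun T hT => if_pos hT)]
    -- reindex by complement
    refine Finset.sum_nbij' (fun T => S₀ \ T) (fun T => S₀ \ T) ?_ ?_ ?_ ?_ ?_
    · intro T hT
      exact Finset.mem_powerset.mpr (Finset.sdiff_subset)
    · intro T hT
      exact Finset.mem_powerset.mpr (Finset.sdiff_subset)
    · intro T hT
      exact Finset.sdiff_sdiff_eq_self (Finset.mem_powerset.mp hT)
    · intro T hT
      exact Finset.sdiff_sdiff_eq_self (Finset.mem_powerset.mp hT)
    · intro T hT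
      have hTS := Finset.mem_powerset.mp hT
      have h2 : T.card ≤ S₀.card := Finset.card_le_card hTS
      rw [Finset.card_sdiff_of_subset hTS]
      congr 2
      omega
  · -- non-squarefree case: both sides vanish
    push_neg at hc
    obtain ⟨i, hi⟩ := hc
    have hi2 : 2 ≤ c i := hi
    have hisupp : i ∈ c.support := Finsupp.mem_support_iff.mpr (by omega)
    have hz2 : ∀ S ∈ (Finset.univ : Finset (Fin dd)).powerset,
        (∑ T ∈ S.powerset, (-1 : ℤ) ^ (S.card - T.card) * f T) * (if c = indF S then 1 else 0)
          = 0 := by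
      intro S _
      rw [if_neg, mul_zero]
      intro h
      have := congrArg (fun x => x i) h
      simp only [indF_apply] at this
      split at this <;> omega
    conv_rhs => rw [Finset.sum_eq_zero hz2]
    refine Finset.sum_ninvolution (fun T => if i ∈ T then Finset.erase T i else insert i T) ?_ ?_ ?_ ?_
    · intro T
      have hmemiff : (indF T ≤ c) ↔ (indF (if i ∈ T then T.erase i else insert i T) ≤ c) := by
        rw [indF_le_iff, indF_le_iff]
        split
        · next h =>
          constructor
          · intro hsub
            exact (Finset.erase_subset i T).trans hsub
          · intro hsub j hj
            by_cases hji : j = i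
            · subst hji; exact hisupp
            · exact hsub (Finset.mem_erase.mpr ⟨hji, hj⟩)
        · next h =>
          constructor
          · intro hsub j hj
            rcases Finset.mem_insert.mp hj with rfl | hj
            · exact hisupp
            · exact hsub hj
          · intro hsub
            exact (Finset.subset_insert i T).trans hsub
      have hcard : ((-1 : ℤ) ^ T.card)
          + (-1 : ℤ) ^ (if i ∈ T then T.erase i else insert i T).card = 0 := by
        split
        · next h =>
          obtain ⟨k, hk⟩ : ∃ k, T.card = k + 1 :=
            ⟨T.card - 1, by have := Finset.card_pos.mpr ⟨i, h⟩; omega⟩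
          rw [Finset.card_erase_of_mem h, hk, Nat.add_sub_cancel, pow_succ]
          ring
        · next h =>
          rw [Finset.card_insert_of_notMem h, pow_succ]
          ring
      by_cases hle : indF T ≤ c
      · rw [if_pos hle, if_pos (hmemiff.mp hle)]
        have hsupps : (c - indF T).support
            = (c - indF (if i ∈ T then T.erase i else insert i T)).support := by
          ext j
          simp only [Finsupp.mem_support_iff, Finsupp.tsub_apply, indF_apply]
          by_cases hji : j = i
          · subst hji
            by_cases hT' : j ∈ T
            · rw [if_pos hT', if_pos hT', if_neg (Finset.notMem_erase j T)]
              omega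
            · rw [if_neg hT', if_neg hT', if_pos (Finset.mem_insert_self j T)]
              omega
          · have : (j ∈ (if i ∈ T then T.erase i else insert i T)) ↔ j ∈ T := by
              split
              · exact Finset.mem_erase.trans (by simp [hji])
              · exact Finset.mem_insert.trans (by simp [hji])
            simp only [this]
        rw [← hsupps]
        calc ((-1:ℤ) ^ T.card * f ((c - indF T).support)
            + (-1:ℤ) ^ (if i ∈ T then T.erase i else insert i T).card * f ((c - indF T).support))
            = (((-1:ℤ) ^ T.card) + (-1:ℤ) ^ (if i ∈ T then T.erase i else insert i T).card)
              * f ((c - indF T).support) := by ring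
          _ = 0 := by rw [hcard, zero_mul]
      · rw [if_neg hle, if_neg (fun h => hle (hmemiff.mpr h)), mul_zero, mul_zero, add_zero]
    · intro T _
      show (if i ∈ T then Finset.erase T i else insert i T) ≠ T
      by_cases h : i ∈ T
      · rw [if_pos h]
        exact fun he => Finset.notMem_erase i T (by rw [he]; exact h)
      · rw [if_neg h]
        exact fun he => h (by rw [← he]; exact Finset.mem_insert_self i T)
    · intro T
      exact Finset.mem_powerset.mpr (Finset.subset_univ _)
    · intro T
      by_cases h : i ∈ T
      · simp [h, Finset.notMem_erase, Finset.insert_erase]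
      · simp [h, Finset.erase_insert]


end Aux

section Aux2

variable {V : Type*} [DecidableEq V]

lemma prod_X_eq (K : Type*) [Field K] (F : Finset V) :
    (∏ v ∈ F, MvPolynomial.X v : MvPolynomial V K) = MvPolynomial.monomial (indF F) 1 := by
  rw [← MvPolynomial.prod_X_pow_eq_monomial, indF_support]
  exact Finset.prod_congr rfl fun v hv => by rw [indF_apply, if_pos hv, pow_one]

lemma mem_srIdeal_iff {K : Type*} [Field K] {Δ : Finset (Finset V)} (hΔ : IsComplex Δ)
    (p : MvPolynomial V K) :
    p ∈ srIdeal K Δ ↔ ∀ m ∈ p.support, m.support ∉ Δ := by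
  have hset : {m : MvPolynomial V K | ∃ F : Finset V, F ∉ Δ ∧ m = ∏ v ∈ F, MvPolynomial.X v}
      = (fun s => MvPolynomial.monomial s (1 : K)) '' (indF '' {F : Finset V | F ∉ Δ}) := by
    ext q
    constructor
    · rintro ⟨F, hF, rfl⟩
      exact ⟨indF F, ⟨F, hF, rfl⟩, (prod_X_eq K F).symm⟩
    · rintro ⟨s, ⟨F, hF, rfl⟩, rfl⟩
      exact ⟨F, hF, (prod_X_eq K F).symm⟩
  rw [srIdeal, hset, MvPolynomial.mem_ideal_span_monomial_image]
  apply forall₂_congr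
  intro m _
  constructor
  · rintro ⟨s, ⟨F, hF, rfl⟩, hle⟩ hmem
    exact hF (hΔ.2 _ hmem _ ((indF_le_iff F m).mp hle))
  · intro h
    exact ⟨indF m.support, ⟨m.support, h, rfl⟩, (indF_le_iff _ _).mpr subset_rfl⟩


lemma kappa_injOn {d : ℕ} {Δ : Finset (Finset V)} {κ : V → Fin d} (hΔ : IsComplex Δ)
    (hκ : IsBalanced d Δ κ) {F : Finset V} (hF : F ∈ Δ) :
    ∀ x ∈ F, ∀ y ∈ F, κ x = κ y → x = y := by
  intro x hx y hy hxy
  by_contra hne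
  have hpair : ({x, y} : Finset V) ∈ Δ := by
    refine hΔ.2 F hF _ ?_
    intro z hz
    simp at hz
    rcases hz with rfl | rfl <;> assumption
  exact hκ _ hpair (Finset.card_pair hne) x (by simp) y (by simp) hne hxy

section Weight

variable {n d : ℕ} (κ : Fin n → Fin d)

lemma weight_eval (m : Fin n →₀ ℕ) (i : Fin d) :
    (Finsupp.weight (fun v => Finsupp.single (κ v) 1) m) i
      = ∑ v ∈ m.support.filter (fun v => κ v = i), m v := by
  classical
  rw [Finsupp.weight_apply, Finsupp.sum]
  rw [Finsupp.finset_sum_apply]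
  rw [Finset.sum_filter]
  refine Finset.sum_congr rfl fun v _ => ?_
  simp [Finsupp.single_apply]

lemma support_weight (m : Fin n →₀ ℕ) :
    (Finsupp.weight (fun v => Finsupp.single (κ v) 1) m).support = m.support.image κ := by
  classical
  ext i
  simp only [Finsupp.mem_support_iff, weight_eval, Finset.mem_image]
  rw [Ne, Finset.sum_eq_zero_iff]
  simp only [Finset.mem_filter, Finsupp.mem_support_iff, not_forall]
  constructor
  · rintro ⟨v, ⟨hv, hvi⟩, -⟩
    exact ⟨v, hv, hvi⟩
  · rintro ⟨v, hv, rfl⟩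
    exact ⟨v, ⟨hv, rfl⟩, hv⟩

noncomputable def mface (a : Fin d →₀ ℕ) (F : Finset (Fin n)) : Fin n →₀ ℕ :=
  ∑ v ∈ F, Finsupp.single v (a (κ v))

lemma mface_apply (a : Fin d →₀ ℕ) (F : Finset (Fin n)) (v : Fin n) :
    mface κ a F v = if v ∈ F then a (κ v) else 0 := by
  classical
  simp [mface, Finsupp.finset_sum_apply, Finsupp.single_apply]

lemma mface_support (a : Fin d →₀ ℕ) (F : Finset (Fin n)) (h : ∀ v ∈ F, a (κ v) ≠ 0) :
    (mface κ a F).support = F := by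
  ext v
  simp only [Finsupp.mem_support_iff, mface_apply]
  split
  · next hv => simpa [hv] using h v hv
  · next hv => simp [hv]

lemma weight_mface (a : Fin d →₀ ℕ) (F : Finset (Fin n))
    (hinj : ∀ x ∈ F, ∀ y ∈ F, κ x = κ y → x = y) (himg : F.image κ = a.support) :
    Finsupp.weight (fun v => Finsupp.single (κ v) 1) (mface κ a F) = a := by
  classical
  rw [mface, map_sum]
  have h1 : ∀ v : Fin n, (Finsupp.weight (fun v => Finsupp.single (κ v) 1))
      (Finsupp.single v (a (κ v))) = Finsupp.single (κ v) (a (κ v)) := by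
    intro v
    rw [Finsupp.weight_apply, Finsupp.sum_single_index] <;>
      simp [Finsupp.smul_single]
  simp_rw [h1]
  rw [← Finset.sum_image (f := fun i => Finsupp.single i (a i)) hinj, himg]
  exact Finsupp.sum_single a

lemma standard_eq_mface {Δ : Finset (Finset (Fin n))} (hΔ : IsComplex Δ)
    (hκ : IsBalanced d Δ κ) {m : Fin n →₀ ℕ} (hm : m.support ∈ Δ) {a : Fin d →₀ ℕ}
    (hw : Finsupp.weight (fun v => Finsupp.single (κ v) 1) m = a) :
    m = mface κ a m.support := by
  classical
  ext v
  rw [mface_apply]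
  split
  · next hv =>
    rw [← hw, weight_eval]
    have hfilt : m.support.filter (fun u => κ u = κ v) = {v} := by
      ext u
      simp only [Finset.mem_filter, Finset.mem_singleton]
      constructor
      · rintro ⟨hu, hui⟩
        exact kappa_injOn hΔ hκ hm u hu v hv hui
      · rintro rfl
        exact ⟨hv, rfl⟩
    rw [hfilt, Finset.sum_singleton]
  · next hv =>
    exact Finsupp.notMem_support_iff.mp hv

end Weight

set_option maxHeartbeats 1000000 in
set_option synthInstance.maxHeartbeats 200000 in
lemma finrank_wpiece (K : Type*) [Field K] {n d : ℕ} {Δ : Finset (Finset (Fin n))}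
    (hΔ : IsComplex Δ) {κ : Fin n → Fin d} (hκ : IsBalanced d Δ κ) (a : Fin d →₀ ℕ) :
    Module.finrank K (wpiece K (fun v => Finsupp.single (κ v) 1) (srIdeal K Δ) a)
      = fFlag κ Δ a.support := by
  classical
  set w : Fin n → (Fin d →₀ ℕ) := fun v => Finsupp.single (κ v) 1 with hwdef
  set I := srIdeal K Δ with hIdef
  set Φ : Finset (Finset (Fin n)) := Δ.filter (fun F => F.image κ = a.support) with hΦdef
  -- membership facts for faces in Φ
  have hΦmem : ∀ F ∈ Φ, F ∈ Δ ∧ F.image κ = a.support := by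
    intro F hF; simpa [hΦdef] using hF
  have hinjF : ∀ F ∈ Φ, ∀ x ∈ F, ∀ y ∈ F, κ x = κ y → x = y := fun F hF =>
    kappa_injOn hΔ hκ (hΦmem F hF).1
  have hne : ∀ F ∈ Φ, ∀ v ∈ F, a (κ v) ≠ 0 := by
    intro F hF v hv
    have : κ v ∈ a.support := (hΦmem F hF).2 ▸ Finset.mem_image_of_mem κ hv
    exact Finsupp.mem_support_iff.mp this
  have hsupp : ∀ F ∈ Φ, (mface κ a F).support = F := fun F hF =>
    mface_support κ a F (hne F hF)
  have hwt : ∀ F ∈ Φ, Finsupp.weight w (mface κ a F) = a := fun F hF =>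
    weight_mface κ a F (hinjF F hF) (hΦmem F hF).2
  have hmf_inj : ∀ F ∈ Φ, ∀ G ∈ Φ, mface κ a F = mface κ a G → F = G := by
    intro F hF G hG h
    rw [← hsupp F hF, ← hsupp G hG, h]
  -- the family
  set q : MvPolynomial (Fin n) K →ₗ[K] MvPolynomial (Fin n) K ⧸ I :=
    (Ideal.Quotient.mkₐ K I).toLinearMap with hqdef
  set e : Φ → MvPolynomial (Fin n) K ⧸ I :=
    fun F => q (MvPolynomial.monomial (mface κ a F.1) 1) with hedef
  -- linear independence
  have hLI : LinearIndependent K e := by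
    rw [Fintype.linearIndependent_iff]
    intro g hg
    have hp : (∑ F : Φ, g F • (MvPolynomial.monomial (mface κ a F.1) (1 : K))) ∈ I := by
      have h2 : q (∑ F : Φ, g F • (MvPolynomial.monomial (mface κ a F.1) (1 : K))) = 0 := by
        rw [map_sum]
        simp_rw [map_smul]
        exact hg
      rw [hqdef] at h2
      simpa using (Ideal.Quotient.eq_zero_iff_mem (I := I) (a := ∑ F : Φ, g F • (MvPolynomial.monomial (mface κ a F.1) (1 : K)))).mp h2
    intro F₀
    by_contra hg0
    have hcoeff : MvPolynomial.coeff (mface κ a F₀.1)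
        (∑ F : Φ, g F • (MvPolynomial.monomial (mface κ a F.1) (1 : K))) = g F₀ := by
      rw [MvPolynomial.coeff_sum]
      rw [Finset.sum_eq_single F₀]
      · simp [MvPolynomial.coeff_monomial]
      · intro F _ hFne
        have : mface κ a F.1 ≠ mface κ a F₀.1 := by
          intro h
          exact hFne (Subtype.ext (hmf_inj _ F.2 _ F₀.2 h))
        simp [MvPolynomial.coeff_monomial, this]
      · intro h
        exact absurd (Finset.mem_univ F₀) h
    have hmem : mface κ a F₀.1 ∈
        (∑ F : Φ, g F • (MvPolynomial.monomial (mface κ a F.1) (1 : K))).support := by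
      rw [MvPolynomial.mem_support_iff, hcoeff]; exact hg0
    have := (mem_srIdeal_iff hΔ _).mp hp _ hmem
    rw [hsupp F₀.1 F₀.2] at this
    exact this (hΦmem F₀.1 F₀.2).1
  -- spanning
  have hspan : wpiece K w I a = Submodule.span K (Set.range e) := by
    rw [wpiece, MvPolynomial.weightedHomogeneousSubmodule_eq_finsupp_supported,
      AddMonoidAlgebra.supported_eq_span_single, Submodule.map_span]
    apply le_antisymm
    · rw [Submodule.span_le]
      rintro - ⟨-, ⟨m, hm, rfl⟩, rfl⟩
      simp only [Set.mem_setOf_eq] at hm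
      by_cases hstd : m.support ∈ Δ
      · have himg : m.support.image κ = a.support := by
          rw [← support_weight κ m, hm]
        have hmΦ : m.support ∈ Φ := by
          rw [hΦdef, Finset.mem_filter]; exact ⟨hstd, himg⟩
        have hmeq : m = mface κ a m.support := standard_eq_mface κ hΔ hκ hstd hm
        apply Submodule.subset_span
        refine ⟨⟨m.support, hmΦ⟩, ?_⟩
        rw [hedef]
        simp only
        rw [← hmeq]
        rfl
      
      · have hzero : (Ideal.Quotient.mkₐ K I).toLinearMap (AddMonoidAlgebra.single m (1 : K)) = 0 := by
          have : (AddMonoidAlgebra.single m (1 : K) : MvPolynomial (Fin n) K) ∈ I := by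
            rw [hIdef, mem_srIdeal_iff hΔ]
            intro m' hm'
            have hm'' : m' = m := by
              rw [MvPolynomial.single_eq_monomial, MvPolynomial.support_monomial] at hm'
              simpa using hm'
            rwa [hm'']
          simpa using (Ideal.Quotient.eq_zero_iff_mem).mpr this
        rw [hzero]
        exact Submodule.zero_mem _
    · rw [Submodule.span_le]
      rintro - ⟨F, rfl⟩
      apply Submodule.subset_span
      refine ⟨MvPolynomial.monomial (mface κ a F.1) 1, ⟨mface κ a F.1, ?_, rfl⟩, rfl⟩
      · simp only [Set.mem_setOf_eq]
        exact hwt F.1 F.2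
  rw [hspan, finrank_span_eq_card hLI, Fintype.card_coe]
  rfl


end Aux2

/-- Lemma 2.2(i).
For a balanced `(d-1)`-dimensional simplicial complex `Δ`, the `ℤ^d`-graded Hilbert
series of `K[Δ]` (with `deg x_v = e_{κ(v)}`) satisfies
`Hilb(K[Δ]) · ∏_{i=1}^d (1 - t_i) = ∑_{S ⊆ [d]} h_S(Δ) ∏_{i ∈ S} t_i`,
an identity of formal power series in `t_1, …, t_d` (stated here after clearing the
denominator `∏ (1 - t_i)`, a unit in the power series ring). -/
theorem graded_hilbert_series (K : Type*) [Field K] (n d : ℕ) (Δ : Finset (Finset (Fin n)))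
    (hΔ : IsComplex Δ) (hdim : DimEq d Δ)
    (κ : Fin n → Fin d) (hκ : IsBalanced d Δ κ) :
    (show MvPowerSeries (Fin d) ℤ from fun a : Fin d →₀ ℕ =>
        (Module.finrank K
          (wpiece K (fun v => Finsupp.single (κ v) 1) (srIdeal K Δ) a) : ℤ)) *
      ∏ i : Fin d, (1 - MvPowerSeries.X i) =
    ∑ S ∈ (Finset.univ : Finset (Fin d)).powerset,
      (hFlag κ Δ S : MvPowerSeries (Fin d) ℤ) * ∏ i ∈ S, MvPowerSeries.X i := by
  classical
  have hfun : (show MvPowerSeries (Fin d) ℤ from fun a : Fin d →₀ ℕ =>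
      (Module.finrank K
        (wpiece K (fun v => Finsupp.single (κ v) 1) (srIdeal K Δ) a) : ℤ))
      = (show MvPowerSeries (Fin d) ℤ from fun a : Fin d →₀ ℕ =>
          ((fFlag κ Δ a.support : ℤ))) := by
    funext a
    rw [finrank_wpiece K hΔ hκ a]
  rw [hfun, series_key (fun S => (fFlag κ Δ S : ℤ))]
  refine Finset.sum_congr rfl fun S _ => ?_
  rw [prod_X_ps, ← eq_intCast (MvPowerSeries.C (σ := Fin d) (R := ℤ)) (hFlag κ Δ S),
    ← MvPowerSeries.smul_eq_C_mul]
  rfl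


end BGLB
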